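/- Let n ≥ 0, and let s and i be integers with i ≥ s ≥ 0 and i ≡ s (mod 2). Then the number of lattice paths P of length n with P ≥ 0 and h(P) = i equals the number of lattice paths P of length n with h(P) = s whose minimum height, min over 0 ≤ a ≤ n of h_a(P), equals −(i − s)/2. -/

import Mathlib

/-- A lattice path of length `n`: each step is `+1` (U) or `-1` (D). -/
def IsPath {n : ℕ} (P : Fin n → ℤ) : Prop := ∀ l, P l = 1 ∨ P l = -1

/-- Height of the path `P` at `x = a`: sum of the first `a` steps. -/
def ht {n : ℕ} (P : Fin n → ℤ) (a : ℕ) : ℤ :=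
  ∑ l ∈ Finset.univ.filter (fun l : Fin n => (l : ℕ) < a), P l

/-- The minimum height of a path over `0 ≤ a ≤ n`. -/
def minHt {n : ℕ} (P : Fin n → ℤ) : ℤ :=
  (Finset.range (n + 1)).inf' Finset.nonempty_range_add_one (fun a => ht P a)

lemma ht_eq_sum_ite {n : ℕ} (P : Fin n → ℤ) (a : ℕ) :
    ht P a = ∑ l : Fin n, if (l : ℕ) < a then P l else 0 := by
  rw [ht, Finset.sum_filter]

lemma ht_zero {n : ℕ} (P : Fin n → ℤ) : ht P 0 = 0 := by
  rw [ht_eq_sum_ite]; simp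

lemma ht_snoc_of_le {n : ℕ} (Q : Fin n → ℤ) (x : ℤ) {a : ℕ} (ha : a ≤ n) :
    ht (Fin.snoc Q x) a = ht Q a := by
  rw [ht_eq_sum_ite, ht_eq_sum_ite, Fin.sum_univ_castSucc]
  simp only [Fin.snoc_castSucc, Fin.coe_castSucc, Fin.snoc_last, Fin.val_last]
  rw [if_neg (by omega)]
  ring

lemma ht_snoc_last {n : ℕ} (Q : Fin n → ℤ) (x : ℤ) :
    ht (Fin.snoc Q x) (n + 1) = ht Q n + x := by
  rw [ht_eq_sum_ite, ht_eq_sum_ite, Fin.sum_univ_castSucc]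
  simp only [Fin.snoc_castSucc, Fin.coe_castSucc, Fin.snoc_last, Fin.val_last]
  rw [if_pos (by omega)]
  congr 1
  apply Finset.sum_congr rfl
  intro l _
  rw [if_pos (by omega), if_pos l.isLt]

lemma inf'_range_split (m : ℕ) (f : ℕ → ℤ) :
    (Finset.range (m + 1 + 1)).inf' Finset.nonempty_range_add_one f
      = min (f (m + 1)) ((Finset.range (m + 1)).inf' Finset.nonempty_range_add_one f) := by
  apply le_antisymm
  · exact le_min (Finset.inf'_le _ (by simp))
      (Finset.le_inf' _ _ fun b hb => Finset.inf'_le _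
        (Finset.mem_range.mpr (by have := Finset.mem_range.mp hb; omega)))
  · apply Finset.le_inf'
    intro b hb
    rcases Nat.lt_succ_iff_lt_or_eq.mp (Finset.mem_range.mp hb) with h | h
    · exact le_trans (min_le_right _ _) (Finset.inf'_le _ (Finset.mem_range.mpr h))
    · subst h; exact min_le_left _ _

lemma minHt_le {n : ℕ} (P : Fin n → ℤ) {a : ℕ} (ha : a ≤ n) : minHt P ≤ ht P a :=
  Finset.inf'_le _ (Finset.mem_range.mpr (by omega))

lemma minHt_nonpos {n : ℕ} (P : Fin n → ℤ) : minHt P ≤ 0 := by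
  have := minHt_le P (Nat.zero_le n)
  rwa [ht_zero] at this

lemma minHt_snoc {n : ℕ} (Q : Fin n → ℤ) (x : ℤ) :
    minHt (Fin.snoc Q x) = min (ht Q n + x) (minHt Q) := by
  rw [minHt, inf'_range_split, ht_snoc_last]
  congr 1
  rw [minHt]
  apply Finset.inf'_congr _ rfl
  intro a ha
  exact ht_snoc_of_le Q x (Nat.lt_succ_iff.mp (Finset.mem_range.mp ha))

lemma minHt_zero (P : Fin 0 → ℤ) : minHt P = 0 := by
  apply le_antisymm (minHt_nonpos P)
  apply Finset.le_inf'
  intro b hb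
  have : b = 0 := by have := Finset.mem_range.mp hb; omega
  subst this
  rw [ht_zero]

instance finPaths {n : ℕ} (C : (Fin n → ℤ) → Prop) :
    Finite {P : Fin n → ℤ // IsPath P ∧ C P} := by
  apply Finite.of_injective (fun P : {P : Fin n → ℤ // IsPath P ∧ C P} =>
    (fun l => decide (P.1 l = 1) : Fin n → Bool))
  rintro ⟨P, hP, _⟩ ⟨R, hR, _⟩ h
  apply Subtype.ext
  funext l
  have := congrFun h l
  simp only [decide_eq_decide] at this
  rcases hP l with h1 | h1 <;> rcases hR l with h2 | h2 <;> simp_all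

lemma isPath_snoc {n : ℕ} {Q : Fin n → ℤ} (hQ : IsPath Q) {x : ℤ} (hx : x = 1 ∨ x = -1) :
    IsPath (Fin.snoc Q x) := by
  intro l
  induction l using Fin.lastCases with
  | last => simpa using hx
  | cast l => simpa using hQ l

lemma card_snoc_split {n : ℕ} (C : (Fin (n + 1) → ℤ) → Prop) :
    Nat.card {P : Fin (n + 1) → ℤ // IsPath P ∧ C P}
      = Nat.card {Q : Fin n → ℤ // IsPath Q ∧ C (Fin.snoc Q 1)}
      + Nat.card {Q : Fin n → ℤ // IsPath Q ∧ C (Fin.snoc Q (-1))} := by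
  rw [← Nat.card_sum]
  apply Nat.card_congr
  refine
    { toFun := fun P =>
        if h : P.1 (Fin.last n) = 1 then
          Sum.inl ⟨Fin.init P.1, fun l => P.2.1 _, by
            have hs : Fin.snoc (Fin.init P.1) (1 : ℤ) = P.1 := by
              rw [← h]; exact Fin.snoc_init_self P.1
            rw [hs]; exact P.2.2⟩
        else
          Sum.inr ⟨Fin.init P.1, fun l => P.2.1 _, by
            have h' : P.1 (Fin.last n) = -1 := (P.2.1 (Fin.last n)).resolve_left h
            have hs : Fin.snoc (Fin.init P.1) (-1 : ℤ) = P.1 := by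
              rw [← h']; exact Fin.snoc_init_self P.1
            rw [hs]; exact P.2.2⟩
      invFun := fun QQ =>
        match QQ with
        | Sum.inl Q => ⟨Fin.snoc Q.1 1, isPath_snoc Q.2.1 (Or.inl rfl), Q.2.2⟩
        | Sum.inr Q => ⟨Fin.snoc Q.1 (-1), isPath_snoc Q.2.1 (Or.inr rfl), Q.2.2⟩
      left_inv := by
        rintro ⟨P, hP, hC⟩
        by_cases h : P (Fin.last n) = 1
        · simp only [dif_pos h]
          apply Subtype.ext
          simp only
          rw [← h]; exact Fin.snoc_init_self P
        · simp only [dif_neg h]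
          apply Subtype.ext
          simp only
          rw [show (-1 : ℤ) = P (Fin.last n) from ((hP (Fin.last n)).resolve_left h).symm]
          exact Fin.snoc_init_self P
      right_inv := by
        rintro (⟨Q, hQ, hC⟩ | ⟨Q, hQ, hC⟩)
        · dsimp only
          have h : Fin.snoc (α := fun _ => ℤ) Q 1 (Fin.last n) = 1 := by simp
          rw [dif_pos h]
          congr 1
          apply Subtype.ext
          simp [Fin.init_snoc]
        · dsimp only
          have h : ¬ (Fin.snoc (α := fun _ => ℤ) Q (-1) (Fin.last n) = 1) := by simp
          rw [dif_neg h]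
          congr 1
          apply Subtype.ext
          simp [Fin.init_snoc] }

lemma card_subtype_or3 {α : Type*} (p q A B : α → Prop)
    [Finite {a : α // p a ∧ q a ∧ A a}] [Finite {a : α // p a ∧ q a ∧ B a}]
    (hd : ∀ a, A a → B a → False) :
    Nat.card {a : α // p a ∧ q a ∧ (A a ∨ B a)}
      = Nat.card {a : α // p a ∧ q a ∧ A a} + Nat.card {a : α // p a ∧ q a ∧ B a} := by
  classical
  rw [← Nat.card_sum]
  apply Nat.card_congr
  refine
    { toFun := fun a =>
        if h : A a.1 then Sum.inl ⟨a.1, a.2.1, a.2.2.1, h⟩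
        else Sum.inr ⟨a.1, a.2.1, a.2.2.1, (a.2.2.2).resolve_left h⟩
      invFun := fun x =>
        match x with
        | Sum.inl a => ⟨a.1, a.2.1, a.2.2.1, Or.inl a.2.2.2⟩
        | Sum.inr a => ⟨a.1, a.2.1, a.2.2.1, Or.inr a.2.2.2⟩
      left_inv := by
        rintro ⟨a, ha⟩
        by_cases h : A a
        · simp only [dif_pos h]
        · simp only [dif_neg h]
      right_inv := by
        rintro (⟨a, h1, h2, h3⟩ | ⟨a, h1, h2, h3⟩)
        · dsimp only
          rw [dif_pos h3]
        · dsimp only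
          rw [dif_neg (fun h => hd a h h3)] }

/-- number of nonnegative paths of length `n` ending at `i` -/
noncomputable def Fc (n : ℕ) (i : ℤ) : ℕ :=
  Nat.card {P : Fin n → ℤ // IsPath P ∧ (∀ a ≤ n, 0 ≤ ht P a) ∧ ht P n = i}

/-- number of paths of length `n` ending at `s` with minimum exactly `m` -/
noncomputable def Gc (n : ℕ) (s m : ℤ) : ℕ :=
  Nat.card {P : Fin n → ℤ // IsPath P ∧ ht P n = s ∧ minHt P = m}

lemma F_zero (i : ℤ) : Fc 0 i = if i = 0 then 1 else 0 := by
  unfold Fc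
  by_cases h : i = 0
  · rw [if_pos h]
    subst h
    rw [Nat.card_eq_one_iff_unique]
    constructor
    · constructor
      intro a b
      apply Subtype.ext
      funext l
      exact l.elim0
    · exact ⟨⟨fun l => l.elim0, fun l => l.elim0,
        fun a ha => by rw [show a = 0 by omega, ht_zero], ht_zero _⟩⟩
  · rw [if_neg h]
    have : IsEmpty {P : Fin 0 → ℤ // IsPath P ∧ (∀ a ≤ 0, 0 ≤ ht P a) ∧ ht P 0 = i} :=
      ⟨fun P => h (by rw [← P.2.2.2, ht_zero])⟩
    exact Nat.card_of_isEmpty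

lemma G_zero (s m : ℤ) : Gc 0 s m = if s = 0 ∧ m = 0 then 1 else 0 := by
  unfold Gc
  by_cases h : s = 0 ∧ m = 0
  · rw [if_pos h]
    obtain ⟨hs, hm⟩ := h
    subst hs; subst hm
    rw [Nat.card_eq_one_iff_unique]
    constructor
    · constructor
      intro a b
      apply Subtype.ext
      funext l
      exact l.elim0
    · exact ⟨⟨fun l => l.elim0, fun l => l.elim0, ht_zero _, minHt_zero _⟩⟩
  · rw [if_neg h]
    have : IsEmpty {P : Fin 0 → ℤ // IsPath P ∧ ht P 0 = s ∧ minHt P = m} :=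
      ⟨fun P => h ⟨by rw [← P.2.2.1, ht_zero], by rw [← P.2.2.2, minHt_zero]⟩⟩
    exact Nat.card_of_isEmpty

lemma F_neg (n : ℕ) (i : ℤ) (hi : i < 0) : Fc n i = 0 := by
  unfold Fc
  have : IsEmpty {P : Fin n → ℤ // IsPath P ∧ (∀ a ≤ n, 0 ≤ ht P a) ∧ ht P n = i} :=
    ⟨fun P => by have := P.2.2.1 n le_rfl; rw [P.2.2.2] at this; omega⟩
  exact Nat.card_of_isEmpty

lemma G_pos (n : ℕ) (s m : ℤ) (hm : 0 < m) : Gc n s m = 0 := by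
  unfold Gc
  have : IsEmpty {P : Fin n → ℤ // IsPath P ∧ ht P n = s ∧ minHt P = m} :=
    ⟨fun P => by have := minHt_nonpos P.1; rw [P.2.2.2] at this; omega⟩
  exact Nat.card_of_isEmpty

lemma nonneg_snoc_iff {n : ℕ} (Q : Fin n → ℤ) (x : ℤ) :
    (∀ a ≤ n + 1, 0 ≤ ht (Fin.snoc Q x) a) ↔ (∀ a ≤ n, 0 ≤ ht Q a) ∧ 0 ≤ ht Q n + x := by
  constructor
  · intro h
    exact ⟨fun a ha => by rw [← ht_snoc_of_le Q x ha]; exact h a (by omega),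
      by rw [← ht_snoc_last]; exact h (n + 1) le_rfl⟩
  · rintro ⟨h1, h2⟩ a ha
    rcases Nat.lt_succ_iff_lt_or_eq.mp (Nat.lt_succ_of_le ha) with h | h
    · rw [ht_snoc_of_le Q x (Nat.lt_succ_iff.mp h)]
      exact h1 _ (Nat.lt_succ_iff.mp h)
    · subst h; rw [ht_snoc_last]; exact h2

lemma F_rec (n : ℕ) (i : ℤ) (hi : 0 ≤ i) : Fc (n + 1) i = Fc n (i - 1) + Fc n (i + 1) := by
  unfold Fc
  rw [card_snoc_split (fun P => (∀ a ≤ n + 1, 0 ≤ ht P a) ∧ ht P (n + 1) = i)]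
  congr 1
  · apply Nat.card_congr
    apply Equiv.subtypeEquivRight
    intro Q
    simp only [nonneg_snoc_iff, ht_snoc_last]
    constructor
    · rintro ⟨hP, ⟨h1, h2⟩, h3⟩
      exact ⟨hP, h1, by omega⟩
    · rintro ⟨hP, h1, h2⟩
      exact ⟨hP, ⟨h1, by omega⟩, by omega⟩
  · apply Nat.card_congr
    apply Equiv.subtypeEquivRight
    intro Q
    simp only [nonneg_snoc_iff, ht_snoc_last]
    constructor
    · rintro ⟨hP, ⟨h1, h2⟩, h3⟩
      exact ⟨hP, h1, by omega⟩
    · rintro ⟨hP, h1, h2⟩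
      exact ⟨hP, ⟨h1, by omega⟩, by omega⟩

lemma G_rec1 (n : ℕ) (s m : ℤ) (hms : m < s) :
    Gc (n + 1) s m = Gc n (s - 1) m + Gc n (s + 1) m := by
  unfold Gc
  rw [card_snoc_split (fun P => ht P (n + 1) = s ∧ minHt P = m)]
  congr 1
  · apply Nat.card_congr
    apply Equiv.subtypeEquivRight
    intro Q
    simp only [ht_snoc_last, minHt_snoc]
    exact and_congr_right fun _ => by omega
  · apply Nat.card_congr
    apply Equiv.subtypeEquivRight
    intro Q
    simp only [ht_snoc_last, minHt_snoc]
    exact and_congr_right fun _ => by omega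

lemma G_rec2 (n : ℕ) (s : ℤ) :
    Gc (n + 1) s s = Gc n (s + 1) s + Gc n (s + 1) (s + 1) := by
  unfold Gc
  rw [card_snoc_split (fun P => ht P (n + 1) = s ∧ minHt P = s)]
  have h0 : Nat.card {Q : Fin n → ℤ // IsPath Q ∧
      ht (Fin.snoc Q 1) (n + 1) = s ∧ minHt (Fin.snoc Q 1) = s} = 0 := by
    have : IsEmpty {Q : Fin n → ℤ // IsPath Q ∧
        ht (Fin.snoc Q 1) (n + 1) = s ∧ minHt (Fin.snoc Q 1) = s} := by
      constructor
      rintro ⟨Q, hQ, h1, h2⟩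
      rw [ht_snoc_last] at h1
      rw [minHt_snoc] at h2
      have := minHt_le Q (le_refl n)
      omega
    exact Nat.card_of_isEmpty
  rw [h0, Nat.zero_add]
  have key : Nat.card {Q : Fin n → ℤ // IsPath Q ∧
      ht (Fin.snoc Q (-1)) (n + 1) = s ∧ minHt (Fin.snoc Q (-1)) = s}
      = Nat.card {Q : Fin n → ℤ // IsPath Q ∧ ht Q n = s + 1 ∧
          (minHt Q = s ∨ minHt Q = s + 1)} := by
    apply Nat.card_congr
    apply Equiv.subtypeEquivRight
    intro Q
    simp only [ht_snoc_last, minHt_snoc]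
    have := minHt_le Q (le_refl n)
    exact and_congr_right fun _ => by omega
  rw [key]
  rw [card_subtype_or3 IsPath (fun Q : Fin n → ℤ => ht Q n = s + 1)
      (fun Q => minHt Q = s) (fun Q => minHt Q = s + 1) (fun a h1 h2 => by omega)]

lemma key_lemma : ∀ n : ℕ, ∀ s k : ℤ, 0 ≤ k → -k ≤ s → Fc n (s + 2 * k) = Gc n s (-k) := by
  intro n
  induction n with
  | zero =>
    intro s k hk hsk
    rw [F_zero, G_zero]
    by_cases h : s + 2 * k = 0
    · rw [if_pos h, if_pos ⟨by omega, by omega⟩]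
    · rw [if_neg h, if_neg (by rintro ⟨h1, h2⟩; omega)]
  | succ n IH =>
    intro s k hk hsk
    rcases lt_or_eq_of_le hsk with hlt | heq
    · -- -k < s
      rw [F_rec n _ (by omega), G_rec1 n s (-k) (by omega)]
      have e1 := IH (s - 1) k hk (by omega)
      have e2 := IH (s + 1) k hk (by omega)
      rw [show s + 2 * k - 1 = s - 1 + 2 * k by ring, e1,
          show s + 2 * k + 1 = s + 1 + 2 * k by ring, e2]
    · -- s = -k
      rcases eq_or_lt_of_le hk with hk0 | hkpos
      · -- k = 0
        have hk0' : k = 0 := hk0.symm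
        have hs0 : s = 0 := by omega
        subst hk0'; subst hs0
        norm_num
        rw [F_rec n 0 le_rfl, F_neg n (0 - 1) (by omega), Nat.zero_add]
        rw [show -(0:ℤ) = 0 by ring] at *
        rw [G_rec2 n 0, G_pos n (0 + 1) (0 + 1) (by omega), Nat.add_zero]
        have := IH 1 0 le_rfl (by omega)
        simpa using this
      · -- k > 0, s = -k
        have hs : s = -k := heq.symm
        rw [F_rec n _ (by omega)]
        rw [show -k = s by omega, G_rec2 n s]
        have e1 := IH (s + 1) k hk (by omega)
        have e2 := IH (s + 1) (k - 1) (by omega) (by omega)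
        rw [show s + 2 * k + 1 = s + 1 + 2 * k by ring, e1,
            show s + 2 * k - 1 = s + 1 + 2 * (k - 1) by ring, e2,
            show -k = s by omega, show -(k - 1) = s + 1 by omega]
        omega

theorem stmt19 (n : ℕ) (s i : ℤ) (hs : 0 ≤ s) (hsi : s ≤ i)
    (hpar : i % 2 = s % 2) :
    Nat.card {P : Fin n → ℤ // IsPath P ∧ (∀ a ≤ n, 0 ≤ ht P a) ∧ ht P n = i} =
    Nat.card {P : Fin n → ℤ // IsPath P ∧ ht P n = s ∧ minHt P = -((i - s) / 2)} := by
  have hdvd : (2 : ℤ) ∣ (i - s) := by omega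
  set k := (i - s) / 2 with hkdef
  have hik : i = s + 2 * k := by
    rw [hkdef]
    rw [Int.mul_ediv_cancel' hdvd]
    ring
  have hk : 0 ≤ k := by
    rw [hkdef]
    exact Int.ediv_nonneg (by omega) (by norm_num)
  have := key_lemma n s k hk (by omega)
  rw [hik]
  exact this
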